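/- For each k ≥ 1 and each m with 0 ≤ m ≤ p−1−k, the k-fold antiderivative of the right Radau polynomial is orthogonal to the Legendre polynomial P_m on [-1,1]: ∫_{-1}^1 R⁻⁽⁻ᵏ⁾_{p+1}(ξ) P_m(ξ) dξ = 0. -/

import Mathlib

open Polynomial intervalIntegral

/-- Polynomial antiderivative. -/
noncomputable def antider (q : Polynomial ℝ) : Polynomial ℝ :=
  q.sum fun n a => C (a / (n + 1)) * X ^ (n + 1)

lemma derivative_antider (q : Polynomial ℝ) : derivative (antider q) = q := by
  conv_rhs => rw [← q.sum_C_mul_X_pow_eq]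
  rw [antider, Polynomial.sum_def, Polynomial.sum_def, map_sum]
  refine Finset.sum_congr rfl fun n _ => ?_
  rw [derivative_C_mul, derivative_X_pow]
  rw [Nat.add_sub_cancel, ← mul_assoc, ← C_mul]
  congr 2
  push_cast
  field_simp

lemma natDegree_antider_le (q : Polynomial ℝ) : (antider q).natDegree ≤ q.natDegree + 1 := by
  refine natDegree_sum_le_of_forall_le _ _ fun n hn => ?_
  exact (natDegree_C_mul_le _ _).trans <| (natDegree_X_pow_le _).trans
    (by simpa using Nat.add_le_add_right (le_natDegree_of_mem_supp n hn) 1)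

lemma vanish (n j : ℕ) (hj : j < n) {x : ℝ} (hx : x = 1 ∨ x = -1) :
    ((fun q : Polynomial ℝ => derivative q)^[j] ((X ^ 2 - 1) ^ n)).eval x = 0 := by
  have hW : ((X : Polynomial ℝ) ^ 2 - 1) ^ n ≠ 0 := by
    apply pow_ne_zero
    intro h
    simpa using congrArg (eval (0 : ℝ)) h
  have hfac : ((X : Polynomial ℝ) ^ 2 - 1) = (X - C 1) * (X - C (-1)) := by ring_nf; simp [C_1]; ring
  have hdvd : (X - C x) ^ n ∣ ((X : Polynomial ℝ) ^ 2 - 1) ^ n := by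
    apply pow_dvd_pow_of_dvd
    rw [hfac]
    rcases hx with rfl | rfl
    · exact Dvd.intro _ rfl
    · exact Dvd.intro_left _ rfl
  have hmult : n ≤ rootMultiplicity x (((X : Polynomial ℝ) ^ 2 - 1) ^ n) :=
    (le_rootMultiplicity_iff hW).mpr hdvd
  exact isRoot_iterate_derivative_of_lt_rootMultiplicity (lt_of_lt_of_le hj hmult)

lemma ibp_poly (f q : Polynomial ℝ) (h1 : f.eval 1 = 0) (h2 : f.eval (-1) = 0) :
    ∫ x in (-1:ℝ)..1, (derivative f).eval x * q.eval x
      = - ∫ x in (-1:ℝ)..1, f.eval x * (derivative q).eval x := by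
  have h := intervalIntegral.integral_mul_deriv_eq_deriv_mul
    (u := fun x => f.eval x) (v := fun x => q.eval x)
    (u' := fun x => (derivative f).eval x) (v' := fun x => (derivative q).eval x)
    (a := (-1:ℝ)) (b := (1:ℝ))
    (fun x _ => f.hasDerivAt x) (fun x _ => q.hasDerivAt x)
    ((derivative f).continuous_aeval.intervalIntegrable _ _)
    ((derivative q).continuous_aeval.intervalIntegrable _ _)
  rw [h1, h2] at h
  simp only [zero_mul, sub_zero, zero_sub] at h
  linarith

lemma rodrigues_aux (n : ℕ) : ∀ j, j ≤ n → ∀ q : Polynomial ℝ, q.natDegree < j →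
    ∫ x in (-1:ℝ)..1,
      ((fun r : Polynomial ℝ => derivative r)^[j] ((X ^ 2 - 1) ^ n)).eval x * q.eval x = 0 := by
  intro j
  induction j with
  | zero => intro _ q hq; omega
  | succ j ih =>
    intro hj q hq
    rw [Function.iterate_succ_apply']
    rw [ibp_poly _ _ (vanish n j (by omega) (Or.inl rfl)) (vanish n j (by omega) (Or.inr rfl))]
    by_cases hd : derivative q = 0
    · simp [hd]
    · have hq0 : q.natDegree ≠ 0 := by
        intro h
        exact hd (derivative_of_natDegree_zero h)
      have : (derivative q).natDegree < j := by
        have := natDegree_derivative_lt hq0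
        omega
      rw [ih (by omega) (derivative q) this, neg_zero]

/-- The `k`-th Legendre polynomial, defined via the Rodrigues formula. -/
noncomputable def leg (k : ℕ) : Polynomial ℝ :=
  C (1 / (2 ^ k * (k.factorial : ℝ))) * (fun q => derivative q)^[k] ((X ^ 2 - 1) ^ k)

/-- The right Radau polynomial `R⁻_{p+1} = P_{p+1} - P_p`. -/
noncomputable def radau (p : ℕ) : Polynomial ℝ := leg (p + 1) - leg p

/-- Iterated antiderivatives of the right Radau polynomial, with base point `-1`. -/
noncomputable def radauIter (p : ℕ) : ℕ → ℝ → ℝ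
  | 0 => fun ξ => (radau p).eval ξ
  | (k + 1) => fun ξ => ∫ s in (-1 : ℝ)..ξ, radauIter p k s

lemma leg_natDegree_le (m : ℕ) : (leg m).natDegree ≤ m := by
  refine (natDegree_C_mul_le _ _).trans ?_
  have h : ((fun q : Polynomial ℝ => derivative q)^[m] ((X ^ 2 - 1) ^ m)).natDegree
      ≤ ((X ^ 2 - 1 : Polynomial ℝ) ^ m).natDegree - m := natDegree_iterate_derivative _ m
  have h2 : ((X ^ 2 - 1 : Polynomial ℝ) ^ m).natDegree ≤ 2 * m := by
    refine (natDegree_pow_le).trans ?_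
    have : ((X : Polynomial ℝ) ^ 2 - 1).natDegree ≤ 2 := by
      refine (natDegree_sub_le _ _).trans ?_
      simp [natDegree_X_pow]
    calc m * ((X:Polynomial ℝ) ^ 2 - 1).natDegree ≤ m * 2 := Nat.mul_le_mul_left m this
      _ = 2 * m := Nat.mul_comm m 2
  omega

lemma radau_orth (p : ℕ) (q : Polynomial ℝ) (hq : q.natDegree < p) :
    ∫ x in (-1:ℝ)..1, (radau p).eval x * q.eval x = 0 := by
  have hA := rodrigues_aux (p + 1) (p + 1) le_rfl q (by omega)
  have hB := rodrigues_aux p p le_rfl q hq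
  have int1 : IntervalIntegrable
      (fun x => ((fun r : Polynomial ℝ => derivative r)^[p+1] ((X ^ 2 - 1) ^ (p+1))).eval x
        * q.eval x) MeasureTheory.volume (-1:ℝ) 1 :=
    (Continuous.mul (Polynomial.continuous_aeval _) (Polynomial.continuous_aeval _)).intervalIntegrable _ _
  have int2 : IntervalIntegrable
      (fun x => ((fun r : Polynomial ℝ => derivative r)^[p] ((X ^ 2 - 1) ^ p)).eval x
        * q.eval x) MeasureTheory.volume (-1:ℝ) 1 :=
    (Continuous.mul (Polynomial.continuous_aeval _) (Polynomial.continuous_aeval _)).intervalIntegrable _ _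
  have : ∀ x : ℝ, (radau p).eval x * q.eval x =
      (1 / (2 ^ (p+1) * ((p+1).factorial : ℝ))) *
        (((fun r : Polynomial ℝ => derivative r)^[p+1] ((X ^ 2 - 1) ^ (p+1))).eval x * q.eval x)
      - (1 / (2 ^ p * (p.factorial : ℝ))) *
        (((fun r : Polynomial ℝ => derivative r)^[p] ((X ^ 2 - 1) ^ p)).eval x * q.eval x) := by
    intro x
    simp only [radau, leg, eval_sub, eval_mul, eval_C]
    ring
  simp only [this]
  rw [intervalIntegral.integral_sub (int1.const_mul _) (int2.const_mul _),
    intervalIntegral.integral_const_mul, intervalIntegral.integral_const_mul, hA, hB]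
  ring

lemma radauIter_cont (p : ℕ) : ∀ k, Continuous (radauIter p k)
  | 0 => Polynomial.continuous_aeval _
  | (k + 1) => by
    have hc := radauIter_cont p k
    have : ∀ x : ℝ, HasDerivAt (radauIter p (k+1)) (radauIter p k x) x := fun x =>
      intervalIntegral.integral_hasDerivAt_right (hc.intervalIntegrable _ _)
        hc.aestronglyMeasurable.stronglyMeasurableAtFilter hc.continuousAt
    exact continuous_iff_continuousAt.mpr fun x => (this x).continuousAt

lemma radauIter_hasDerivAt (p k : ℕ) (x : ℝ) :
    HasDerivAt (radauIter p (k+1)) (radauIter p k x) x :=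
  intervalIntegral.integral_hasDerivAt_right
    ((radauIter_cont p k).intervalIntegrable _ _)
    (radauIter_cont p k).aestronglyMeasurable.stronglyMeasurableAtFilter
    (radauIter_cont p k).continuousAt

lemma radauIter_main (p : ℕ) : ∀ k, ∀ q : Polynomial ℝ, q.natDegree + k + 1 ≤ p →
    ∫ x in (-1:ℝ)..1, radauIter p k x * q.eval x = 0 := by
  intro k
  induction k with
  | zero =>
    intro q hq
    exact radau_orth p q (by omega)
  | succ k ih =>
    intro q hq
    set Q := antider q with hQ
    have h := intervalIntegral.integral_mul_deriv_eq_deriv_mul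
      (u := radauIter p (k+1)) (v := fun x => Q.eval x)
      (u' := radauIter p k) (v' := fun x => q.eval x)
      (a := (-1:ℝ)) (b := (1:ℝ))
      (fun x _ => radauIter_hasDerivAt p k x)
      (fun x _ => by
        have := Q.hasDerivAt x
        rwa [derivative_antider] at this)
      ((radauIter_cont p k).intervalIntegrable _ _)
      (q.continuous_aeval.intervalIntegrable _ _)
    have hm1 : radauIter p (k+1) (-1) = 0 := by
      show (∫ s in (-1:ℝ)..(-1:ℝ), radauIter p k s) = 0
      exact intervalIntegral.integral_same
    have h1 : radauIter p (k+1) 1 = 0 := by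
      have := ih 1 (by simpa using by omega)
      show (∫ s in (-1:ℝ)..1, radauIter p k s) = 0
      simpa using this
    have hQint : ∫ x in (-1:ℝ)..1, radauIter p k x * Q.eval x = 0 := by
      refine ih Q ?_
      have h2 := natDegree_antider_le q
      rw [← hQ] at h2
      omega
    rw [h1, hm1, hQint] at h
    simpa using h

theorem radauIter_orthogonal (p k m : ℕ) (hk : 1 ≤ k) (hm : m + k + 1 ≤ p) :
    ∫ ξ in (-1 : ℝ)..1, radauIter p k ξ * (leg m).eval ξ = 0 := by
  refine radauIter_main p k (leg m) ?_
  have := leg_natDegree_le m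
  omega
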